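/- Fix integers n ≥ 1 and N ≥ 2. Let (Θ, 𝒜, π) be a probability space, let θ ↦ ν_θ be a Markov kernel from Θ to the Borel probability measures on ℝ^n such that each ν_θ is absolutely continuous with respect to the Lebesgue measure, and let μ be the mixture μ(·) := ∫_Θ ν_θ^{⊗N}(·) dπ(θ) on (ℝ^n)^N (so the N components of X ∼ μ are conditionally i.i.d. given θ). Then for every measurable φ : [0,∞) → ℝ with ‖φ‖²_{L²(ρ)} := (1/(N(N−1))) Σ_{i ≠ j} ∫ φ(‖x_i − x_j‖)² ‖x_i − x_j‖² dμ(X) < ∞, one has ‖f_φ‖²_{L²(μ)} ≥ ((N−1)/N²) ‖φ‖²_{L²(ρ)}. -/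

import Mathlib

open MeasureTheory Finset
open scoped ENNReal RealInnerProductSpace

/-- The interaction velocity field `f_φ(X)_i = (1/N) ∑_{j ≠ i} φ(‖x_j − x_i‖)(x_j − x_i)`. -/
noncomputable def interactionField (n N : ℕ) (φ : ℝ → ℝ)
    (X : Fin N → EuclideanSpace ℝ (Fin n)) (i : Fin N) : EuclideanSpace ℝ (Fin n) :=
  (N : ℝ)⁻¹ • ∑ j ∈ Finset.univ.erase i, φ ‖X j - X i‖ • (X j - X i)

namespace Coercivity

noncomputable def gker (φ : ℝ → ℝ) {E : Type*} [NormedAddCommGroup E] [NormedSpace ℝ E]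
    (x y : E) : E := φ ‖y - x‖ • (y - x)

variable {α : Type*} [MeasurableSpace α]

lemma pi_cyl2 {N : ℕ} (ν : Measure α) [IsProbabilityMeasure ν]
    {i j : Fin N} (hij : i ≠ j) (s t : Set α) :
    (Measure.pi fun _ : Fin N => ν) {X | X i ∈ s ∧ X j ∈ t} = ν s * ν t := by
  classical
  have hset : {X : Fin N → α | X i ∈ s ∧ X j ∈ t} =
      Set.pi Set.univ (fun l => if l = i then s else if l = j then t else Set.univ) := by
    ext X
    simp only [Set.mem_pi, Set.mem_univ, Set.mem_setOf_eq, forall_true_left]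
    constructor
    · rintro ⟨h1, h2⟩ l
      split_ifs with e1 e2
      · exact e1 ▸ h1
      · exact e2 ▸ h2
      · exact Set.mem_univ _
    · intro h
      refine ⟨?_, ?_⟩
      · have := h i; rwa [if_pos rfl] at this
      · have := h j; rwa [if_neg hij.symm, if_pos rfl] at this
  rw [hset, Measure.pi_pi]
  rw [← Finset.prod_subset (Finset.subset_univ ({i, j} : Finset (Fin N)))
    (fun l _ hl => ?_)]
  · rw [Finset.prod_insert (by simp [hij]), Finset.prod_singleton, if_pos rfl,
      if_neg hij.symm, if_pos rfl]
  · simp only [Finset.mem_insert, Finset.mem_singleton, not_or] at hl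
    rw [if_neg hl.1, if_neg hl.2, measure_univ]

lemma pi_cyl3 {N : ℕ} (ν : Measure α) [IsProbabilityMeasure ν]
    {i j k : Fin N} (hij : i ≠ j) (hik : i ≠ k) (hjk : j ≠ k) (s t u : Set α) :
    (Measure.pi fun _ : Fin N => ν) {X | X i ∈ s ∧ X j ∈ t ∧ X k ∈ u} =
      ν s * ν t * ν u := by
  classical
  have hset : {X : Fin N → α | X i ∈ s ∧ X j ∈ t ∧ X k ∈ u} =
      Set.pi Set.univ
        (fun l => if l = i then s else if l = j then t else if l = k then u else Set.univ) := by
    ext X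
    simp only [Set.mem_pi, Set.mem_univ, Set.mem_setOf_eq, forall_true_left]
    constructor
    · rintro ⟨h1, h2, h3⟩ l
      split_ifs with e1 e2 e3
      · exact e1 ▸ h1
      · exact e2 ▸ h2
      · exact e3 ▸ h3
      · exact Set.mem_univ _
    · intro h
      refine ⟨?_, ?_, ?_⟩
      · have := h i; rwa [if_pos rfl] at this
      · have := h j; rwa [if_neg hij.symm, if_pos rfl] at this
      · have := h k; rwa [if_neg hik.symm, if_neg hjk.symm, if_pos rfl] at this
  rw [hset, Measure.pi_pi]
  rw [← Finset.prod_subset (Finset.subset_univ ({i, j, k} : Finset (Fin N)))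
    (fun l _ hl => ?_)]
  · rw [Finset.prod_insert (by simp [hij, hik]), Finset.prod_insert (by simp [hjk]),
      Finset.prod_singleton, if_pos rfl, if_neg hij.symm, if_pos rfl,
      if_neg hik.symm, if_neg hjk.symm, if_pos rfl, mul_assoc]
  · simp only [Finset.mem_insert, Finset.mem_singleton, not_or] at hl
    rw [if_neg hl.1, if_neg hl.2.1, if_neg hl.2.2, measure_univ]

lemma map_pair {N : ℕ} (ν : Measure α) [IsProbabilityMeasure ν] {i j : Fin N} (hij : i ≠ j) :
    (Measure.pi fun _ : Fin N => ν).map (fun X => (X i, X j)) = ν.prod ν := by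
  refine (Measure.prod_eq fun s t hs ht => ?_).symm
  rw [Measure.map_apply ((measurable_pi_apply i).prodMk (measurable_pi_apply j))
    (hs.prod ht)]
  have hpre : (fun X : Fin N → α => (X i, X j)) ⁻¹' s ×ˢ t = {X | X i ∈ s ∧ X j ∈ t} := rfl
  rw [hpre, pi_cyl2 ν hij s t]

lemma map_tri {N : ℕ} (ν : Measure α) [IsProbabilityMeasure ν] {i j k : Fin N}
    (hij : i ≠ j) (hik : i ≠ k) (hjk : j ≠ k) :
    (Measure.pi fun _ : Fin N => ν).map (fun X => (X i, (X j, X k))) =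
      ν.prod (ν.prod ν) := by
  have hm : Measurable fun X : Fin N → α => (X i, (X j, X k)) :=
    (measurable_pi_apply i).prodMk ((measurable_pi_apply j).prodMk (measurable_pi_apply k))
  refine (Measure.prod_eq_generateFrom MeasurableSpace.generateFrom_measurableSet
    generateFrom_prod MeasurableSpace.isPiSystem_measurableSet isPiSystem_prod ν.toFiniteSpanningSetsIn
    ⟨fun _ => Set.univ ×ˢ Set.univ,
      fun _ => Set.mem_image2_of_mem MeasurableSet.univ MeasurableSet.univ,
      fun _ => by rw [Measure.prod_prod]; exact ENNReal.mul_lt_top (measure_lt_top _ _) (measure_lt_top _ _),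
      by simp [Set.iUnion_const]⟩ ?_).symm
  rintro s hs _ ⟨t, ht, u, hu, rfl⟩
  rw [Measure.map_apply hm ((hs : MeasurableSet s).prod ((ht : MeasurableSet t).prod hu))]
  have hpre : (fun X : Fin N → α => (X i, (X j, X k))) ⁻¹' s ×ˢ t ×ˢ u =
      {X | X i ∈ s ∧ X j ∈ t ∧ X k ∈ u} := rfl
  rw [hpre, pi_cyl3 ν hij hik hjk s t u, Measure.prod_prod, mul_assoc]

lemma measurable_pi_measure {Θ : Type*} [MeasurableSpace Θ] {N : ℕ}
    {ν : Θ → Measure α} (hν : Measurable ν) (hp : ∀ θ, IsProbabilityMeasure (ν θ)) :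
    Measurable fun θ => Measure.pi (fun _ : Fin N => ν θ) := by
  apply Measure.measurable_of_measurable_coe
  have : ∀ ⦃t : Set (Fin N → α)⦄, MeasurableSet t →
      Measurable fun θ => Measure.pi (fun _ : Fin N => ν θ) t := by
    refine MeasurableSpace.induction_on_inter generateFrom_pi.symm isPiSystem_pi ?_ ?_ ?_ ?_
    · simp only [measure_empty]; exact measurable_const
    · rintro _ ⟨s, hs, rfl⟩
      simp only [Set.mem_pi, Set.mem_univ, forall_true_left] at hs
      have : ∀ θ, Measure.pi (fun _ : Fin N => ν θ) (Set.pi Set.univ s) =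
          ∏ l : Fin N, ν θ (s l) := by
        intro θ
        haveI := hp θ
        rw [Measure.pi_pi]
      simp only [this]
      exact Finset.measurable_prod _ fun l _ =>
        (Measure.measurable_coe (hs l)).comp hν
    · intro t ht hrec
      have : ∀ θ, Measure.pi (fun _ : Fin N => ν θ) tᶜ =
          1 - Measure.pi (fun _ : Fin N => ν θ) t := by
        intro θ
        haveI := hp θ
        rw [measure_compl ht (measure_ne_top _ _), measure_univ]
      simp only [this]
      exact measurable_const.sub hrec
    · intro f hdisj hmeas hrec
      have : ∀ θ, Measure.pi (fun _ : Fin N => ν θ) (⋃ m, f m) =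
          ∑' m, Measure.pi (fun _ : Fin N => ν θ) (f m) := fun θ =>
        measure_iUnion hdisj hmeas
      simp only [this]
      exact Measurable.ennreal_tsum hrec
  exact fun t ht => this ht


variable {E : Type*} [NormedAddCommGroup E] [InnerProductSpace ℝ E] [MeasurableSpace E]
  [BorelSpace E] [SecondCountableTopology E] [CompleteSpace E]

lemma measurable_gker {φ : ℝ → ℝ} (hφ : Measurable φ) :
    Measurable (fun p : E × E => gker φ p.1 p.2) := by
  have h1 : Measurable fun p : E × E => p.2 - p.1 := measurable_snd.sub measurable_fst
  exact (continuous_smul.measurable).comp ((hφ.comp h1.norm).prodMk h1)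

lemma cross_nonneg {N : ℕ} (ν : Measure E) [IsProbabilityMeasure ν]
    {φ : ℝ → ℝ} (hφ : Measurable φ) {i j k : Fin N}
    (hij : i ≠ j) (hik : i ≠ k) (hjk : j ≠ k)
    (hIj : Integrable (fun X : Fin N → E => ‖gker φ (X i) (X j)‖ ^ 2)
      (Measure.pi fun _ : Fin N => ν))
    (hIk : Integrable (fun X : Fin N → E => ‖gker φ (X i) (X k)‖ ^ 2)
      (Measure.pi fun _ : Fin N => ν)) :
    0 ≤ ∫ X, ⟪gker φ (X i) (X j), gker φ (X i) (X k)⟫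
        ∂(Measure.pi fun _ : Fin N => ν) := by
  set P := (Measure.pi fun _ : Fin N => ν) with hP
  have mg : Measurable (fun p : E × E => gker φ p.1 p.2) := measurable_gker hφ
  have mT2 : Measurable fun X : Fin N → E => (X i, X j) :=
    (measurable_pi_apply i).prodMk (measurable_pi_apply j)
  have mT3 : Measurable fun X : Fin N → E => (X i, (X j, X k)) :=
    (measurable_pi_apply i).prodMk ((measurable_pi_apply j).prodMk (measurable_pi_apply k))
  have mcross3 : Measurable fun p : E × E × E => ⟪gker φ p.1 p.2.1, gker φ p.1 p.2.2⟫ :=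
    Measurable.inner (mg.comp (measurable_fst.prodMk (measurable_fst.comp measurable_snd)))
      (mg.comp (measurable_fst.prodMk (measurable_snd.comp measurable_snd)))
  have mT2' : Measurable fun X : Fin N → E => (X i, X k) :=
    (measurable_pi_apply i).prodMk (measurable_pi_apply k)
  have mcrossP : Measurable fun X : Fin N → E =>
      ⟪gker φ (X i) (X j), gker φ (X i) (X k)⟫ :=
    Measurable.inner (mg.comp mT2) (mg.comp mT2')
  have hIcross : Integrable
      (fun X : Fin N → E => ⟪gker φ (X i) (X j), gker φ (X i) (X k)⟫) P := by
    refine Integrable.mono' (hIj.add hIk) mcrossP.aestronglyMeasurable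
      (Filter.Eventually.of_forall fun X => ?_)
    simp only [Pi.add_apply]
    have h1 := abs_real_inner_le_norm (gker φ (X i) (X j)) (gker φ (X i) (X k))
    have h2 : (0:ℝ) ≤ ‖gker φ (X i) (X j)‖ := norm_nonneg _
    have h3 : (0:ℝ) ≤ ‖gker φ (X i) (X k)‖ := norm_nonneg _
    rw [Real.norm_eq_abs]
    nlinarith [sq_nonneg (‖gker φ (X i) (X j)‖ - ‖gker φ (X i) (X k)‖)]
  have hpair : Integrable (fun p : E × E => ‖gker φ p.1 p.2‖ ^ 2) (ν.prod ν) := by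
    rw [← map_pair ν hij]
    exact (integrable_map_measure (mg.norm.pow_const 2).aestronglyMeasurable
      mT2.aemeasurable).mpr hIj
  have hgint : ∀ᵐ a ∂ν, Integrable (fun b => gker φ a b) ν := by
    filter_upwards [hpair.prod_right_ae] with a ha
    have mga : Measurable fun b : E => gker φ a b :=
      mg.comp (measurable_const.prodMk measurable_id)
    refine Integrable.mono' ((integrable_const (1:ℝ)).add ha) mga.aestronglyMeasurable
      (Filter.Eventually.of_forall fun b => ?_)
    simp only [Pi.add_apply]
    have h0 : (0:ℝ) ≤ ‖gker φ a b‖ := norm_nonneg _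
    nlinarith [sq_nonneg (‖gker φ a b‖ - 1)]
  have hI3 : Integrable (fun p : E × E × E => ⟪gker φ p.1 p.2.1, gker φ p.1 p.2.2⟫)
      (ν.prod (ν.prod ν)) := by
    rw [← map_tri ν hij hik hjk]
    exact (integrable_map_measure mcross3.aestronglyMeasurable mT3.aemeasurable).mpr hIcross
  have key : ∫ X, ⟪gker φ (X i) (X j), gker φ (X i) (X k)⟫ ∂P =
      ∫ p, ⟪gker φ p.1 p.2.1, gker φ p.1 p.2.2⟫ ∂(ν.prod (ν.prod ν)) := by
    rw [← map_tri ν hij hik hjk, integral_map mT3.aemeasurable mcross3.aestronglyMeasurable]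
  rw [key, integral_prod _ hI3]
  refine integral_nonneg_of_ae ?_
  filter_upwards [hI3.prod_right_ae, hgint] with a ha hga
  rw [integral_prod _ ha]
  show 0 ≤ ∫ b, ∫ c, ⟪gker φ a b, gker φ a c⟫ ∂ν ∂ν
  have inner1 : ∀ b : E, ∫ c, ⟪gker φ a b, gker φ a c⟫ ∂ν =
      ⟪gker φ a b, ∫ c, gker φ a c ∂ν⟫ := fun b => integral_inner hga _
  have h2 : ∫ b, ⟪gker φ a b, ∫ c, gker φ a c ∂ν⟫ ∂ν =
      ‖∫ c, gker φ a c ∂ν‖ ^ 2 := by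
    have hflip : ∀ b : E, ⟪gker φ a b, ∫ c, gker φ a c ∂ν⟫ =
        ⟪∫ c, gker φ a c ∂ν, gker φ a b⟫ := fun b => real_inner_comm _ _
    rw [integral_congr_ae (Filter.Eventually.of_forall hflip), integral_inner hga,
      real_inner_self_eq_norm_sq]
  rw [integral_congr_ae (Filter.Eventually.of_forall inner1), h2]
  positivity


lemma core {N : ℕ} (hN : 1 ≤ N) (ν : Measure E) [IsProbabilityMeasure ν]
    {φ : ℝ → ℝ} (hφ : Measurable φ)
    (hfin : ∀ i : Fin N, ∀ j ∈ Finset.univ.erase i,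
      ∫⁻ X, ENNReal.ofReal (‖gker φ (X i) (X j)‖ ^ 2)
        ∂(Measure.pi fun _ : Fin N => ν) ≠ ⊤) :
    ((N : ℝ≥0∞) ^ 3)⁻¹ * ∑ i : Fin N, ∑ j ∈ Finset.univ.erase i,
        ∫⁻ X, ENNReal.ofReal (‖gker φ (X i) (X j)‖ ^ 2) ∂(Measure.pi fun _ : Fin N => ν)
      ≤ ∫⁻ X, ENNReal.ofReal ((N : ℝ)⁻¹ * ∑ i : Fin N,
          ‖(N : ℝ)⁻¹ • ∑ j ∈ Finset.univ.erase i, gker φ (X i) (X j)‖ ^ 2)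
        ∂(Measure.pi fun _ : Fin N => ν) := by
  set P := (Measure.pi fun _ : Fin N => ν) with hP
  have mg : Measurable (fun p : E × E => gker φ p.1 p.2) := measurable_gker hφ
  have mgij : ∀ i j : Fin N, Measurable fun X : Fin N → E => gker φ (X i) (X j) := by
    intro i j
    have h := mg.comp ((measurable_pi_apply i).prodMk (measurable_pi_apply j) :
      Measurable fun X : Fin N → E => (X i, X j))
    exact h
  have mh : ∀ i j : Fin N, Measurable fun X : Fin N → E => ‖gker φ (X i) (X j)‖ ^ 2 :=
    fun i j => (mgij i j).norm.pow_const 2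
  have hInt : ∀ i : Fin N, ∀ j ∈ Finset.univ.erase i,
      Integrable (fun X : Fin N → E => ‖gker φ (X i) (X j)‖ ^ 2) P := by
    intro i j hj
    refine ⟨(mh i j).aestronglyMeasurable, ?_⟩
    rw [hasFiniteIntegral_iff_ofReal (Filter.Eventually.of_forall fun X => by positivity)]
    exact lt_top_iff_ne_top.mpr (hfin i j hj)
  -- pointwise expansion
  have key : ∀ X : Fin N → E,
      (N : ℝ)⁻¹ * ∑ i : Fin N,
        ‖(N : ℝ)⁻¹ • ∑ j ∈ Finset.univ.erase i, gker φ (X i) (X j)‖ ^ 2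
      = ((N : ℝ)⁻¹) ^ 3 *
        ((∑ i : Fin N, ∑ j ∈ Finset.univ.erase i, ‖gker φ (X i) (X j)‖ ^ 2) +
         (∑ i : Fin N, ∑ j ∈ Finset.univ.erase i,
            ∑ k ∈ (Finset.univ.erase i).erase j,
              ⟪gker φ (X i) (X j), gker φ (X i) (X k)⟫)) := by
    intro X
    have h1 : ∀ i : Fin N,
        ‖(N : ℝ)⁻¹ • ∑ j ∈ Finset.univ.erase i, gker φ (X i) (X j)‖ ^ 2 =
          ((N : ℝ)⁻¹) ^ 2 * ‖∑ j ∈ Finset.univ.erase i, gker φ (X i) (X j)‖ ^ 2 := by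
      intro i
      rw [norm_smul, mul_pow, norm_inv, Real.norm_natCast]
    have h2 : ∀ i : Fin N,
        ‖∑ j ∈ Finset.univ.erase i, gker φ (X i) (X j)‖ ^ 2 =
          ∑ j ∈ Finset.univ.erase i, (‖gker φ (X i) (X j)‖ ^ 2 +
            ∑ k ∈ (Finset.univ.erase i).erase j,
              ⟪gker φ (X i) (X j), gker φ (X i) (X k)⟫) := by
      intro i
      rw [← real_inner_self_eq_norm_sq, sum_inner]
      refine Finset.sum_congr rfl fun j hj => ?_
      rw [inner_sum, ← Finset.add_sum_erase _ _ hj, real_inner_self_eq_norm_sq]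
    simp only [h1, h2]
    simp only [Finset.sum_add_distrib, ← Finset.mul_sum]
    ring
  -- integrability of cross terms
  have hIntCross : ∀ i : Fin N, ∀ j ∈ Finset.univ.erase i,
      ∀ k ∈ (Finset.univ.erase i).erase j,
      Integrable (fun X : Fin N → E =>
        ⟪gker φ (X i) (X j), gker φ (X i) (X k)⟫) P := by
    intro i j hj k hk
    have hk' : k ∈ Finset.univ.erase i := (Finset.mem_of_mem_erase hk)
    refine Integrable.mono' ((hInt i j hj).add (hInt i k hk'))
      ((Measurable.inner (mgij i j) (mgij i k)).aestronglyMeasurable)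
      (Filter.Eventually.of_forall fun X => ?_)
    simp only [Pi.add_apply]
    have h1 := abs_real_inner_le_norm (gker φ (X i) (X j)) (gker φ (X i) (X k))
    have h2 : (0:ℝ) ≤ ‖gker φ (X i) (X j)‖ := norm_nonneg _
    have h3 : (0:ℝ) ≤ ‖gker φ (X i) (X k)‖ := norm_nonneg _
    rw [Real.norm_eq_abs]
    nlinarith [sq_nonneg (‖gker φ (X i) (X j)‖ - ‖gker φ (X i) (X k)‖)]
  have hIntA : Integrable (fun X : Fin N → E =>
      ∑ i : Fin N, ∑ j ∈ Finset.univ.erase i, ‖gker φ (X i) (X j)‖ ^ 2) P :=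
    integrable_finset_sum _ fun i _ => integrable_finset_sum _ fun j hj => hInt i j hj
  have hIntC : Integrable (fun X : Fin N → E =>
      ∑ i : Fin N, ∑ j ∈ Finset.univ.erase i,
        ∑ k ∈ (Finset.univ.erase i).erase j,
          ⟪gker φ (X i) (X j), gker φ (X i) (X k)⟫) P :=
    integrable_finset_sum _ fun i _ => integrable_finset_sum _ fun j hj =>
      integrable_finset_sum _ fun k hk => hIntCross i j hj k hk
  have hCpos : 0 ≤ ∫ X, (∑ i : Fin N, ∑ j ∈ Finset.univ.erase i,
      ∑ k ∈ (Finset.univ.erase i).erase j,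
        ⟪gker φ (X i) (X j), gker φ (X i) (X k)⟫) ∂P := by
    rw [integral_finset_sum _ fun i _ => integrable_finset_sum _ fun j hj =>
      integrable_finset_sum _ fun k hk => hIntCross i j hj k hk]
    refine Finset.sum_nonneg fun i _ => ?_
    rw [integral_finset_sum _ fun j hj =>
      integrable_finset_sum _ fun k hk => hIntCross i j hj k hk]
    refine Finset.sum_nonneg fun j hj => ?_
    rw [integral_finset_sum _ fun k hk => hIntCross i j hj k hk]
    refine Finset.sum_nonneg fun k hk => ?_
    have hji : j ≠ i := Finset.ne_of_mem_erase hj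
    have hkj : k ≠ j := Finset.ne_of_mem_erase hk
    have hki : k ≠ i := Finset.ne_of_mem_erase (Finset.mem_of_mem_erase hk)
    exact cross_nonneg ν hφ hji.symm hki.symm hkj.symm (hInt i j hj)
      (hInt i k (Finset.mem_of_mem_erase hk))
  have hFeq : (fun X : Fin N → E => (N : ℝ)⁻¹ * ∑ i : Fin N,
      ‖(N : ℝ)⁻¹ • ∑ j ∈ Finset.univ.erase i, gker φ (X i) (X j)‖ ^ 2) =
      fun X => ((N : ℝ)⁻¹) ^ 3 *
        ((∑ i : Fin N, ∑ j ∈ Finset.univ.erase i, ‖gker φ (X i) (X j)‖ ^ 2) +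
         (∑ i : Fin N, ∑ j ∈ Finset.univ.erase i,
            ∑ k ∈ (Finset.univ.erase i).erase j,
              ⟪gker φ (X i) (X j), gker φ (X i) (X k)⟫)) := funext key
  have hIntF : Integrable (fun X : Fin N → E => (N : ℝ)⁻¹ * ∑ i : Fin N,
      ‖(N : ℝ)⁻¹ • ∑ j ∈ Finset.univ.erase i, gker φ (X i) (X j)‖ ^ 2) P := by
    rw [hFeq]
    exact (hIntA.add hIntC).const_mul _
  have hFnn : 0 ≤ᵐ[P] fun X : Fin N → E => (N : ℝ)⁻¹ * ∑ i : Fin N,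
      ‖(N : ℝ)⁻¹ • ∑ j ∈ Finset.univ.erase i, gker φ (X i) (X j)‖ ^ 2 :=
    Filter.Eventually.of_forall fun X => by positivity
  rw [← ofReal_integral_eq_lintegral_ofReal hIntF hFnn]
  -- reduce to a real inequality
  have hIntreal : ∀ i : Fin N, ∀ j ∈ Finset.univ.erase i,
      ∫⁻ X, ENNReal.ofReal (‖gker φ (X i) (X j)‖ ^ 2) ∂P =
        ENNReal.ofReal (∫ X, ‖gker φ (X i) (X j)‖ ^ 2 ∂P) := fun i j hj =>
    (ofReal_integral_eq_lintegral_ofReal (hInt i j hj)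
      (Filter.Eventually.of_forall fun X => by positivity)).symm
  have hsum : ∑ i : Fin N, ∑ j ∈ Finset.univ.erase i,
      ∫⁻ X, ENNReal.ofReal (‖gker φ (X i) (X j)‖ ^ 2) ∂P =
      ENNReal.ofReal (∑ i : Fin N, ∑ j ∈ Finset.univ.erase i,
        ∫ X, ‖gker φ (X i) (X j)‖ ^ 2 ∂P) := by
    rw [ENNReal.ofReal_sum_of_nonneg fun i _ => Finset.sum_nonneg fun j hj =>
      integral_nonneg fun X => by positivity]
    refine Finset.sum_congr rfl fun i _ => ?_
    rw [ENNReal.ofReal_sum_of_nonneg fun j hj => integral_nonneg fun X => by positivity]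
    exact Finset.sum_congr rfl fun j hj => hIntreal i j hj
  have hcoef : ((N : ℝ≥0∞) ^ 3)⁻¹ = ENNReal.ofReal (((N : ℝ)⁻¹) ^ 3) := by
    have hNpos : (0:ℝ) < N := by exact_mod_cast hN
    rw [ENNReal.ofReal_pow (by positivity), ENNReal.ofReal_inv_of_pos hNpos,
      ENNReal.ofReal_natCast, ENNReal.inv_pow]
  rw [hsum, hcoef, ← ENNReal.ofReal_mul (by positivity)]
  refine ENNReal.ofReal_le_ofReal ?_
  have hintF2 : ∫ X, ((N : ℝ)⁻¹ * ∑ i : Fin N,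
      ‖(N : ℝ)⁻¹ • ∑ j ∈ Finset.univ.erase i, gker φ (X i) (X j)‖ ^ 2) ∂P =
      ((N : ℝ)⁻¹) ^ 3 *
        ((∫ X, (∑ i : Fin N, ∑ j ∈ Finset.univ.erase i, ‖gker φ (X i) (X j)‖ ^ 2) ∂P) +
         (∫ X, (∑ i : Fin N, ∑ j ∈ Finset.univ.erase i,
            ∑ k ∈ (Finset.univ.erase i).erase j,
              ⟪gker φ (X i) (X j), gker φ (X i) (X k)⟫) ∂P)) := by
    rw [hFeq, integral_const_mul, integral_add hIntA hIntC]
  have hintA2 : ∫ X, (∑ i : Fin N, ∑ j ∈ Finset.univ.erase i,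
      ‖gker φ (X i) (X j)‖ ^ 2) ∂P =
      ∑ i : Fin N, ∑ j ∈ Finset.univ.erase i, ∫ X, ‖gker φ (X i) (X j)‖ ^ 2 ∂P := by
    rw [integral_finset_sum _ fun i _ => integrable_finset_sum _ fun j hj => hInt i j hj]
    exact Finset.sum_congr rfl fun i _ =>
      integral_finset_sum _ fun j hj => hInt i j hj
  rw [hintF2, hintA2]
  have h3 : (0:ℝ) ≤ ((N : ℝ)⁻¹) ^ 3 := by positivity
  exact mul_le_mul_of_nonneg_left (le_add_of_nonneg_right hCpos) h3
end Coercivity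

open Coercivity

/-- coercivity `‖f_φ‖²_{L²(μ)} ≥ ((N−1)/N²) ‖φ‖²_{L²(ρ)}` when `μ` is a
mixture `μ = ∫ ν_θ^{⊗N} dπ(θ)` of i.i.d. laws, with each `ν_θ` absolutely continuous
(the conditionally i.i.d. / de Finetti case). -/
theorem interactionField_coercivity_conditionally_iid
    (n N : ℕ) (hn : 1 ≤ n) (hN : 2 ≤ N)
    {Θ : Type*} [MeasurableSpace Θ]
    (π : Measure Θ) [IsProbabilityMeasure π]
    (ν : Θ → Measure (EuclideanSpace ℝ (Fin n)))
    (hνmeas : Measurable ν)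
    (hνprob : ∀ θ, IsProbabilityMeasure (ν θ))
    (hνac : ∀ θ, ν θ ≪ volume)
    (μ : Measure (Fin N → EuclideanSpace ℝ (Fin n)))
    (hμ : μ = π.bind fun θ => Measure.pi fun _ : Fin N => ν θ)
    (φ : ℝ → ℝ) (hφ : Measurable φ)
    (hρfin : ((N * (N - 1) : ℕ) : ℝ≥0∞)⁻¹ *
        ∑ i : Fin N, ∑ j ∈ Finset.univ.erase i,
          ∫⁻ X, ENNReal.ofReal ((φ ‖X i - X j‖) ^ 2 * ‖X i - X j‖ ^ 2) ∂μ ≠ ⊤) :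
    ∫⁻ X, ENNReal.ofReal ((N : ℝ)⁻¹ * ∑ i : Fin N, ‖interactionField n N φ X i‖ ^ 2) ∂μ ≥
      (((N - 1 : ℕ) : ℝ≥0∞) / ((N : ℝ≥0∞) ^ 2)) *
        (((N * (N - 1) : ℕ) : ℝ≥0∞)⁻¹ *
          ∑ i : Fin N, ∑ j ∈ Finset.univ.erase i,
            ∫⁻ X, ENNReal.ofReal ((φ ‖X i - X j‖) ^ 2 * ‖X i - X j‖ ^ 2) ∂μ) := by
  classical
  subst hμ
  set E' := EuclideanSpace ℝ (Fin n) with hE'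
  have hPmeas : Measurable fun θ => Measure.pi (fun _ : Fin N => ν θ) :=
    measurable_pi_measure hνmeas hνprob
  have mg : Measurable (fun p : E' × E' => gker φ p.1 p.2) := measurable_gker hφ
  have mgij : ∀ i j : Fin N, Measurable fun X : Fin N → E' => gker φ (X i) (X j) := by
    intro i j
    have h := mg.comp ((measurable_pi_apply i).prodMk (measurable_pi_apply j) :
      Measurable fun X : Fin N → E' => (X i, X j))
    exact h
  have mE : ∀ i j : Fin N,
      Measurable fun X : Fin N → E' => ENNReal.ofReal (‖gker φ (X i) (X j)‖ ^ 2) :=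
    fun i j => ((mgij i j).norm.pow_const 2).ennreal_ofReal
  have hg_eq : ∀ (i j : Fin N) (X : Fin N → E'),
      (φ ‖X i - X j‖) ^ 2 * ‖X i - X j‖ ^ 2 = ‖gker φ (X i) (X j)‖ ^ 2 := by
    intro i j X
    rw [gker, norm_smul, mul_pow, Real.norm_eq_abs, sq_abs, norm_sub_rev (X i) (X j)]
  -- notation for per-θ pair energies
  set H : Fin N → Fin N → Θ → ℝ≥0∞ := fun i j θ =>
    ∫⁻ X, ENNReal.ofReal (‖gker φ (X i) (X j)‖ ^ 2) ∂(Measure.pi fun _ : Fin N => ν θ)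
    with hH
  have mHθ : ∀ i j : Fin N, Measurable fun θ => H i j θ := fun i j =>
    (Measure.measurable_lintegral (mE i j)).comp hPmeas
  have hbind : ∀ i j : Fin N,
      ∫⁻ X, ENNReal.ofReal ((φ ‖X i - X j‖) ^ 2 * ‖X i - X j‖ ^ 2)
        ∂(π.bind fun θ => Measure.pi fun _ : Fin N => ν θ) = ∫⁻ θ, H i j θ ∂π := by
    intro i j
    have h1 : (fun X : Fin N → E' =>
        ENNReal.ofReal ((φ ‖X i - X j‖) ^ 2 * ‖X i - X j‖ ^ 2)) =
        fun X => ENNReal.ofReal (‖gker φ (X i) (X j)‖ ^ 2) :=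
      funext fun X => by rw [hg_eq]
    rw [h1, Measure.lintegral_bind hPmeas.aemeasurable (mE i j).aemeasurable]
  have hsumrw : ∑ i : Fin N, ∑ j ∈ Finset.univ.erase i,
      ∫⁻ X, ENNReal.ofReal ((φ ‖X i - X j‖) ^ 2 * ‖X i - X j‖ ^ 2)
        ∂(π.bind fun θ => Measure.pi fun _ : Fin N => ν θ) =
      ∑ i : Fin N, ∑ j ∈ Finset.univ.erase i, ∫⁻ θ, H i j θ ∂π :=
    Finset.sum_congr rfl fun i _ => Finset.sum_congr rfl fun j _ => hbind i j
  rw [hsumrw] at hρfin ⊢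
  -- finiteness of each pair
  have hN0 : ((N : ℕ) : ℝ≥0∞) ≠ 0 := Nat.cast_ne_zero.mpr (by omega)
  have hNT : ((N : ℕ) : ℝ≥0∞) ≠ ⊤ := ENNReal.natCast_ne_top _
  have hb0 : (((N - 1 : ℕ)) : ℝ≥0∞) ≠ 0 := Nat.cast_ne_zero.mpr (by omega)
  have hbT : (((N - 1 : ℕ)) : ℝ≥0∞) ≠ ⊤ := ENNReal.natCast_ne_top _
  have hc0 : (((N * (N - 1) : ℕ)) : ℝ≥0∞) ≠ 0 := Nat.cast_ne_zero.mpr (by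
    have : 1 ≤ N - 1 := by omega
    positivity)
  have hcT : (((N * (N - 1) : ℕ)) : ℝ≥0∞) ≠ ⊤ := ENNReal.natCast_ne_top _
  have hS : ∑ i : Fin N, ∑ j ∈ Finset.univ.erase i, ∫⁻ θ, H i j θ ∂π ≠ ⊤ := by
    intro h
    rw [h, ENNReal.mul_top (ENNReal.inv_ne_zero.mpr hcT)] at hρfin
    exact hρfin rfl
  have hHfin : ∀ i : Fin N, ∀ j ∈ Finset.univ.erase i, ∫⁻ θ, H i j θ ∂π ≠ ⊤ := by
    intro i j hj
    have h1 := (ENNReal.sum_lt_top.mp (lt_top_iff_ne_top.mpr hS)) i (Finset.mem_univ i)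
    exact ((ENNReal.sum_lt_top.mp h1) j hj).ne
  have hae : ∀ᵐ θ ∂π, ∀ i : Fin N, ∀ j ∈ Finset.univ.erase i, H i j θ ≠ ⊤ := by
    rw [ae_all_iff]
    intro i
    rw [ae_all_iff]
    intro j
    by_cases hj : j ∈ Finset.univ.erase i
    · exact ((ae_lt_top (mHθ i j) (hHfin i j hj)).mono fun θ h => fun _ => h.ne)
    · exact Filter.Eventually.of_forall fun θ h => absurd h hj
  -- rewrite the left-hand side
  have hF : (fun X : Fin N → E' =>
      ENNReal.ofReal ((N : ℝ)⁻¹ * ∑ i : Fin N, ‖interactionField n N φ X i‖ ^ 2)) =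
      fun X => ENNReal.ofReal ((N : ℝ)⁻¹ * ∑ i : Fin N,
        ‖(N : ℝ)⁻¹ • ∑ j ∈ Finset.univ.erase i, gker φ (X i) (X j)‖ ^ 2) := rfl
  have mF : Measurable fun X : Fin N → E' => ENNReal.ofReal ((N : ℝ)⁻¹ * ∑ i : Fin N,
      ‖(N : ℝ)⁻¹ • ∑ j ∈ Finset.univ.erase i, gker φ (X i) (X j)‖ ^ 2) := by
    refine Measurable.ennreal_ofReal (Measurable.const_mul ?_ _)
    refine Finset.measurable_sum _ fun i _ => ?_
    exact ((Finset.measurable_sum _ fun j _ => mgij i j).const_smul ((N:ℝ)⁻¹)).norm.pow_const 2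
  rw [hF, Measure.lintegral_bind hPmeas.aemeasurable mF.aemeasurable]
  -- main bound
  have hmain : ∀ᵐ θ ∂π, ((N : ℝ≥0∞) ^ 3)⁻¹ * ∑ i : Fin N, ∑ j ∈ Finset.univ.erase i, H i j θ
      ≤ ∫⁻ X, ENNReal.ofReal ((N : ℝ)⁻¹ * ∑ i : Fin N,
          ‖(N : ℝ)⁻¹ • ∑ j ∈ Finset.univ.erase i, gker φ (X i) (X j)‖ ^ 2)
        ∂(Measure.pi fun _ : Fin N => ν θ) := by
    filter_upwards [hae] with θ hθ
    haveI := hνprob θ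
    exact core (by omega) (ν θ) hφ hθ
  have hle : ∫⁻ θ, (((N : ℝ≥0∞) ^ 3)⁻¹ * ∑ i : Fin N, ∑ j ∈ Finset.univ.erase i, H i j θ) ∂π
      ≤ ∫⁻ θ, (∫⁻ X, ENNReal.ofReal ((N : ℝ)⁻¹ * ∑ i : Fin N,
          ‖(N : ℝ)⁻¹ • ∑ j ∈ Finset.univ.erase i, gker φ (X i) (X j)‖ ^ 2)
        ∂(Measure.pi fun _ : Fin N => ν θ)) ∂π := lintegral_mono_ae hmain
  have hsplit : ∫⁻ θ, (((N : ℝ≥0∞) ^ 3)⁻¹ *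
      ∑ i : Fin N, ∑ j ∈ Finset.univ.erase i, H i j θ) ∂π =
      ((N : ℝ≥0∞) ^ 3)⁻¹ * ∑ i : Fin N, ∑ j ∈ Finset.univ.erase i, ∫⁻ θ, H i j θ ∂π := by
    rw [lintegral_const_mul' _ _ (ENNReal.inv_ne_top.mpr (pow_ne_zero 3 hN0))]
    congr 1
    rw [lintegral_finset_sum _ fun i _ => Finset.measurable_sum _ fun j _ => mHθ i j]
    exact Finset.sum_congr rfl fun i _ => lintegral_finset_sum _ fun j hj => mHθ i j
  refine le_trans (le_of_eq ?_) (hsplit ▸ hle)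
  -- coefficient identity
  rw [← mul_assoc]
  congr 1
  have hab : ((N * (N - 1) : ℕ) : ℝ≥0∞) = (N : ℝ≥0∞) * (((N - 1 : ℕ)) : ℝ≥0∞) := by
    push_cast; ring
  rw [hab, ENNReal.mul_inv (Or.inl hN0) (Or.inl hNT), div_eq_mul_inv]
  calc (((N - 1 : ℕ)) : ℝ≥0∞) * ((N : ℝ≥0∞) ^ 2)⁻¹ * ((N : ℝ≥0∞)⁻¹ * (((N - 1 : ℕ)) : ℝ≥0∞)⁻¹)
      = ((((N - 1 : ℕ)) : ℝ≥0∞) * (((N - 1 : ℕ)) : ℝ≥0∞)⁻¹) *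
        (((N : ℝ≥0∞) ^ 2)⁻¹ * (N : ℝ≥0∞)⁻¹) := by ring
    _ = ((N : ℝ≥0∞) ^ 2)⁻¹ * (N : ℝ≥0∞)⁻¹ := by
        rw [ENNReal.mul_inv_cancel hb0 hbT, one_mul]
    _ = ((N : ℝ≥0∞) ^ 2 * (N : ℝ≥0∞))⁻¹ :=
        (ENNReal.mul_inv (Or.inl (pow_ne_zero 2 hN0)) (Or.inl (ENNReal.pow_ne_top hNT))).symm
    _ = ((N : ℝ≥0∞) ^ 3)⁻¹ := by rw [← pow_succ]
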